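/- arXiv:2206.02403 — 9 statements merged into one kernel-verified Lean document; each statement's English description precedes it below -/
import Mathlib

section
/- Let a be a nonzero split quaternion with I_a = 0, written a = z1 + z2 j with z1, z2 complex. Define a^+ = (conj(z1) + z2 j)/(4 |z1|^2). Then a * a^+ * a = a and a^+ * a * a^+ = a^+. -/
open Quaternion

/-- The split quaternion algebra: `i^2 = -1`, `j^2 = 1`. -/
abbrev Hs : Type := ℍ[ℝ, -1, 1]

/-- The embedding of the complex numbers into the split quaternions. -/
def toHs (z : ℂ) : Hs := ⟨z.re, z.im, 0, 0⟩

/-- The basis element `j` of the split quaternions. -/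
def jq : Hs := ⟨0, 0, 1, 0⟩

/-- If `a = z1 + z2 j` is a nonzero split quaternion with `I_a = |z1|^2 - |z2|^2 = 0`,
then its Moore–Penrose inverse `a⁺ = (conj z1 + z2 j) / (4 |z1|^2)` satisfies
`a * a⁺ * a = a` and `a⁺ * a * a⁺ = a⁺`. -/
theorem pinv_props (z1 z2 : ℂ) (a : Hs) (ha : a = toHs z1 + toHs z2 * jq)
    (hne : a ≠ 0) (hI : Complex.normSq z1 - Complex.normSq z2 = 0) :
    a * ((4 * Complex.normSq z1)⁻¹ • (toHs (starRingEnd ℂ z1) + toHs z2 * jq)) * a = a ∧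
    ((4 * Complex.normSq z1)⁻¹ • (toHs (starRingEnd ℂ z1) + toHs z2 * jq)) * a *
        ((4 * Complex.normSq z1)⁻¹ • (toHs (starRingEnd ℂ z1) + toHs z2 * jq)) =
      (4 * Complex.normSq z1)⁻¹ • (toHs (starRingEnd ℂ z1) + toHs z2 * jq) := by
  have hz1 : z1 ≠ 0 := by
    rintro rfl
    have h2 : Complex.normSq z2 = 0 := by simpa using hI.symm
    have hz2 : z2 = 0 := Complex.normSq_eq_zero.mp h2
    subst hz2
    apply hne
    rw [ha]
    ext <;> simp [toHs, jq, QuaternionAlgebra.re_mul, QuaternionAlgebra.imI_mul,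
      QuaternionAlgebra.imJ_mul, QuaternionAlgebra.imK_mul]
  have hns : Complex.normSq z1 ≠ 0 := fun h => hz1 (Complex.normSq_eq_zero.mp h)
  have h4 : (4 : ℝ) * Complex.normSq z1 ≠ 0 := by positivity
  have e1 : z1.re ^ 2 + z1.im ^ 2 = Complex.normSq z1 := by simp [Complex.normSq]; ring
  have e2 : z2.re ^ 2 + z2.im ^ 2 = Complex.normSq z1 := by
    have h2 : Complex.normSq z2 = Complex.normSq z1 := by linarith
    rw [← h2]; simp [Complex.normSq]; ring
  set n := Complex.normSq z1 with hn
  set b : Hs := toHs (starRingEnd ℂ z1) + toHs z2 * jq with hb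
  have key1 : a * b * a = (4 * n) • a := by
    rw [ha, hb]
    ext
    · simp [toHs, jq, QuaternionAlgebra.re_mul, QuaternionAlgebra.imI_mul,
        QuaternionAlgebra.imJ_mul, QuaternionAlgebra.imK_mul]
      linear_combination z1.re * e1 + 3 * z1.re * e2
    · simp [toHs, jq, QuaternionAlgebra.re_mul, QuaternionAlgebra.imI_mul,
        QuaternionAlgebra.imJ_mul, QuaternionAlgebra.imK_mul]
      linear_combination z1.im * e1 + 3 * z1.im * e2
    · simp [toHs, jq, QuaternionAlgebra.re_mul, QuaternionAlgebra.imI_mul,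
        QuaternionAlgebra.imJ_mul, QuaternionAlgebra.imK_mul]
      linear_combination 3 * z2.re * e1 + z2.re * e2
    · simp [toHs, jq, QuaternionAlgebra.re_mul, QuaternionAlgebra.imI_mul,
        QuaternionAlgebra.imJ_mul, QuaternionAlgebra.imK_mul]
      linear_combination 3 * z2.im * e1 + z2.im * e2
  have key2 : b * a * b = (4 * n) • b := by
    rw [ha, hb]
    ext
    · simp [toHs, jq, QuaternionAlgebra.re_mul, QuaternionAlgebra.imI_mul,
        QuaternionAlgebra.imJ_mul, QuaternionAlgebra.imK_mul]
      linear_combination z1.re * e1 + 3 * z1.re * e2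
    · simp [toHs, jq, QuaternionAlgebra.re_mul, QuaternionAlgebra.imI_mul,
        QuaternionAlgebra.imJ_mul, QuaternionAlgebra.imK_mul]
      linear_combination -z1.im * e1 - 3 * z1.im * e2
    · simp [toHs, jq, QuaternionAlgebra.re_mul, QuaternionAlgebra.imI_mul,
        QuaternionAlgebra.imJ_mul, QuaternionAlgebra.imK_mul]
      linear_combination 3 * z2.re * e1 + z2.re * e2
    · simp [toHs, jq, QuaternionAlgebra.re_mul, QuaternionAlgebra.imI_mul,
        QuaternionAlgebra.imJ_mul, QuaternionAlgebra.imK_mul]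
      linear_combination 3 * z2.im * e1 + z2.im * e2
  constructor
  · rw [mul_smul_comm, smul_mul_assoc, key1, smul_smul, inv_mul_cancel₀ h4, one_smul]
  · rw [smul_mul_assoc, smul_mul_assoc, mul_smul_comm, key2, smul_smul, smul_smul,
      mul_assoc, inv_mul_cancel₀ h4, mul_one]
end

section
/- Let a be a nonzero split quaternion with I_a = 0, written a = z1 + z2 j. Then a * a^+ = (1 + (z2/conj(z1)) j)/2 and a^+ * a = (1 + (z2/z1) j)/2, where a^+ = (conj(z1) + z2 j)/(4|z1|^2). -/
open Quaternion

set_option maxHeartbeats 1000000 in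
/-- If `a = z1 + z2 j` is a nonzero split quaternion with `I_a = 0` and
`a⁺ = (conj z1 + z2 j)/(4 |z1|^2)`, then `a * a⁺ = (1 + (z2 / conj z1) j)/2`
and `a⁺ * a = (1 + (z2 / z1) j)/2`. -/
theorem mul_pinv_eq (z1 z2 : ℂ) (a : Hs) (ha : a = toHs z1 + toHs z2 * jq)
    (hne : a ≠ 0) (hI : Complex.normSq z1 - Complex.normSq z2 = 0) :
    a * ((4 * Complex.normSq z1)⁻¹ • (toHs (starRingEnd ℂ z1) + toHs z2 * jq)) =
      (2 : ℝ)⁻¹ • (1 + toHs (z2 / starRingEnd ℂ z1) * jq) ∧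
    ((4 * Complex.normSq z1)⁻¹ • (toHs (starRingEnd ℂ z1) + toHs z2 * jq)) * a =
      (2 : ℝ)⁻¹ • (1 + toHs (z2 / z1) * jq) := by
  have hz1 : z1 ≠ 0 := by
    intro h
    apply hne
    have h2 : Complex.normSq z2 = 0 := by
      rw [h] at hI
      simpa [neg_eq_zero] using hI
    have hz2 : z2 = 0 := Complex.normSq_eq_zero.mp h2
    rw [ha, h, hz2]
    ext <;> simp [toHs, jq]
  have hn : Complex.normSq z1 ≠ 0 := (Complex.normSq_pos.mpr hz1).ne'
  have hn' : z1.re * z1.re + z1.im * z1.im ≠ 0 := by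
    simpa [Complex.normSq_apply] using hn
  have hI' : z2.re ^ 2 + z2.im ^ 2 = z1.re ^ 2 + z1.im ^ 2 := by
    have := hI
    simp [Complex.normSq_apply, sq] at this ⊢
    linarith
  subst ha
  refine ⟨?_, ?_⟩ <;> ext
  all_goals
    simp [toHs, jq, Complex.div_re, Complex.div_im, Complex.normSq_apply]
    field_simp
    try ring
  all_goals
    have hpos : z1.re ^ 2 + z1.im ^ 2 ≠ 0 := by simpa [sq] using hn'
    field_simp
    linarith [hI']
end

section
/- Let a, d be split quaternions and define a^+ to be 0 if a = 0, conj(a)/I_a if I_a ≠ 0, and (conj(z1) + z2 j)/(4|z1|^2) if I_a = 0 and a ≠ 0 (where a = z1 + z2 j). Then the equation a x = d has a solution x in H_s if and only if a * a^+ * d = d. -/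
open Quaternion

/-- The real scalar `I_x = x0^2 + x1^2 - x2^2 - x3^2` of a split quaternion. -/
def Ix (x : Hs) : ℝ := x.re ^ 2 + x.imI ^ 2 - x.imJ ^ 2 - x.imK ^ 2

open Classical in
/-- The Moore–Penrose inverse of a split quaternion: `0` if `a = 0`,
`conj a / I_a` if `I_a ≠ 0`, and `(conj z1 + z2 j)/(4 |z1|^2)` if `I_a = 0`
and `a ≠ 0`, where `a = z1 + z2 j`. -/
noncomputable def pinv (a : Hs) : Hs :=
  if a = 0 then 0
  else if Ix a ≠ 0 then (Ix a)⁻¹ • star a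
  else (4 * (a.re ^ 2 + a.imI ^ 2))⁻¹ • (⟨a.re, -a.imI, a.imJ, a.imK⟩ : Hs)

lemma apa (a : Hs) : a * pinv a * a = a := by
  unfold pinv
  split_ifs with h1 h2
  · simp [h1]
  · ext <;>
      simp [QuaternionAlgebra.re_mul, QuaternionAlgebra.imI_mul,
        QuaternionAlgebra.imJ_mul, QuaternionAlgebra.imK_mul, Ix] at h2 ⊢ <;>
      field_simp <;> ring
  · push_neg at h2
    unfold Ix at h2
    have hz : a.re ^ 2 + a.imI ^ 2 ≠ 0 := by
      intro h
      have hre : a.re = 0 := by nlinarith [sq_nonneg a.re, sq_nonneg a.imI]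
      have hi : a.imI = 0 := by nlinarith [sq_nonneg a.re, sq_nonneg a.imI]
      have hj : a.imJ = 0 := by nlinarith [sq_nonneg a.imJ, sq_nonneg a.imK]
      have hk : a.imK = 0 := by nlinarith [sq_nonneg a.imJ, sq_nonneg a.imK]
      exact h1 (by ext <;> simp [hre, hi, hj, hk])
    have key : a * (⟨a.re, -a.imI, a.imJ, a.imK⟩ : Hs) * a
        = (4 * (a.re ^ 2 + a.imI ^ 2)) • a := by
      ext <;>
        simp only [QuaternionAlgebra.re_mul, QuaternionAlgebra.imI_mul,
          QuaternionAlgebra.imJ_mul, QuaternionAlgebra.imK_mul,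
          QuaternionAlgebra.re_smul, QuaternionAlgebra.imI_smul,
          QuaternionAlgebra.imJ_smul, QuaternionAlgebra.imK_smul, smul_eq_mul]
      · linear_combination (-3 * a.re) * h2
      · linear_combination (-3 * a.imI) * h2
      · linear_combination (-a.imJ) * h2
      · linear_combination (-a.imK) * h2
    have h4 : (4 : ℝ) * (a.re ^ 2 + a.imI ^ 2) ≠ 0 := by
      simpa using hz
    rw [mul_smul_comm, smul_mul_assoc, key, smul_smul, inv_mul_cancel₀ h4, one_smul]

/-- The equation `a x = d` over the split quaternions is solvable iff
`a * a⁺ * d = d`. -/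
theorem linear_solvable_iff (a d : Hs) :
    (∃ x : Hs, a * x = d) ↔ a * pinv a * d = d := by
  constructor
  · rintro ⟨x, rfl⟩
    rw [← mul_assoc, apa a]
  · intro h
    exact ⟨pinv a * d, by rw [← mul_assoc]; exact h⟩
end

section
/- Let a, d be split quaternions with a * a^+ * d = d (so that a x = d is solvable). Then the full solution set of a x = d is { a^+ d + (1 - a^+ a) y : y ∈ H_s }. -/
open Quaternion

/-- If `a * a⁺ * d = d`, then the solution set of `a x = d` is exactly
`{ a⁺ d + (1 - a⁺ a) y : y ∈ H_s }`. -/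
theorem linear_solution_set (a d : Hs) (h : a * pinv a * d = d) :
    {x : Hs | a * x = d} = {x : Hs | ∃ y : Hs, x = pinv a * d + (1 - pinv a * a) * y} := by
  ext x
  simp only [Set.mem_setOf_eq]
  constructor
  · intro hx
    refine ⟨x, ?_⟩
    have h1 : pinv a * d = pinv a * a * x := by rw [mul_assoc, hx]
    rw [h1]
    noncomm_ring
  · rintro ⟨y, rfl⟩
    have h2 : a * (pinv a * d + (1 - pinv a * a) * y)
        = a * pinv a * d + (a - a * pinv a * a) * y := by noncomm_ring
    rw [h2, apa, sub_self, zero_mul, add_zero, h]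
end

section
/- Let A be an n×n matrix over the split quaternions and p, q invertible split quaternions. Then λ is a left eigenvalue of A if and only if p λ q is a left eigenvalue of p A q. -/
open Quaternion

/-- `lam` is a left eigenvalue of a split quaternion matrix `A` if `A x = lam x`
for some vector `x` having at least one invertible (non-zero-divisor) component. -/
def IsLeftEigenvalue {n : ℕ} (A : Matrix (Fin n) (Fin n) Hs) (lam : Hs) : Prop :=
  ∃ x : Fin n → Hs, (∃ i, IsUnit (x i)) ∧ A.mulVec x = fun i => lam * x i

lemma leftEig_conj_fwd {n : ℕ} (A : Matrix (Fin n) (Fin n) Hs) (p q lam : Hs)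
    (hq : IsUnit q) (h : IsLeftEigenvalue A lam) :
    IsLeftEigenvalue (Matrix.of fun i j => p * A i j * q) (p * lam * q) := by
  obtain ⟨q, rfl⟩ := hq
  obtain ⟨x, ⟨i, hi⟩, hx⟩ := h
  refine ⟨fun j => (↑q⁻¹ : Hs) * x j, ⟨i, (q⁻¹).isUnit.mul hi⟩, ?_⟩
  funext k
  have hk : A.mulVec x k = lam * x k := congrFun hx k
  simp only [Matrix.mulVec, dotProduct, Matrix.of_apply] at *
  calc ∑ j, (p * A k j * ↑q) * ((↑q⁻¹ : Hs) * x j)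
      = ∑ j, p * (A k j * x j) := by
        refine Finset.sum_congr rfl fun j _ => ?_
        rw [mul_assoc (p * A k j), Units.mul_inv_cancel_left, mul_assoc]
    _ = p * ∑ j, A k j * x j := by rw [Finset.mul_sum]
    _ = p * lam * ↑q * ((↑q⁻¹ : Hs) * x k) := by
        rw [hk, mul_assoc (p * lam), Units.mul_inv_cancel_left, mul_assoc]

/-- For invertible split quaternions `p, q`, `lam` is a left eigenvalue of `A`
iff `p * lam * q` is a left eigenvalue of `p A q`. -/
theorem leftEig_conj_iff {n : ℕ} (A : Matrix (Fin n) (Fin n) Hs) (p q lam : Hs)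
    (hp : IsUnit p) (hq : IsUnit q) :
    IsLeftEigenvalue A lam ↔
      IsLeftEigenvalue (Matrix.of fun i j => p * A i j * q) (p * lam * q) := by
  obtain ⟨p, rfl⟩ := hp
  obtain ⟨q, rfl⟩ := hq
  constructor
  · exact leftEig_conj_fwd A _ _ lam q.isUnit
  · rintro ⟨x, ⟨i, hi⟩, hx⟩
    refine ⟨fun j => (↑q : Hs) * x j, ⟨i, q.isUnit.mul hi⟩, ?_⟩
    funext k
    have hk : (Matrix.of fun i j => (↑p : Hs) * A i j * ↑q).mulVec x k
        = ↑p * lam * ↑q * x k := congrFun hx k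
    simp only [Matrix.mulVec, dotProduct, Matrix.of_apply] at *
    have key : (↑p : Hs) * ∑ j, A k j * (↑q * x j) = ↑p * (lam * (↑q * x k)) := by
      calc (↑p : Hs) * ∑ j, A k j * (↑q * x j)
          = ∑ j, ↑p * A k j * ↑q * x j := by
            rw [Finset.mul_sum]
            exact Finset.sum_congr rfl fun j _ => by rw [mul_assoc, mul_assoc]
        _ = ↑p * lam * ↑q * x k := hk
        _ = ↑p * (lam * (↑q * x k)) := by rw [mul_assoc, mul_assoc]
    calc ∑ j, A k j * (↑q * x j)
        = (↑p⁻¹ : Hs) * ((↑p : Hs) * ∑ j, A k j * (↑q * x j)) := by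
          rw [Units.inv_mul_cancel_left]
      _ = (↑p⁻¹ : Hs) * ((↑p : Hs) * (lam * (↑q * x k))) := by rw [key]
      _ = lam * (↑q * x k) := by rw [Units.inv_mul_cancel_left]
end

section
/- Let A be the 2×2 lower triangular split quaternion matrix with rows (a, 0) and (c, d). For any split quaternion x satisfying c x^2 + (d - a) x = 0, the element λ = c x + d is a left eigenvalue of A with eigenvector (x, 1)^T. In particular (taking x = 0), d is always a left eigenvalue of A. -/
open Quaternion

/-- For the lower triangular matrix `![![a, 0], ![c, d]]`, whenever
`c x² + (d - a) x = 0`, the element `c x + d` is a left eigenvalue with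
eigenvector `(x, 1)ᵀ`; in particular `d` is always a left eigenvalue. -/
theorem lower_triangular_eig_quadratic (a c d : Hs) :
    (∀ x : Hs, c * x ^ 2 + (d - a) * x = 0 →
      (Matrix.mulVec !![a, 0; c, d] ![x, 1] = fun i => (c * x + d) * (![x, 1] i)) ∧
        IsLeftEigenvalue !![a, 0; c, d] (c * x + d)) ∧
      IsLeftEigenvalue !![a, 0; c, d] d := by
  have key : ∀ x : Hs, c * x ^ 2 + (d - a) * x = 0 →
      Matrix.mulVec !![a, 0; c, d] ![x, 1] = fun i => (c * x + d) * (![x, 1] i) := by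
    intro x hx
    have hax : a * x = c * x ^ 2 + d * x := by
      have : c * x ^ 2 + d * x - a * x = 0 := by
        rw [← hx]; noncomm_ring
      exact (sub_eq_zero.mp this).symm
    funext i
    fin_cases i <;>
      simp [Matrix.mulVec, dotProduct, hax] <;> noncomm_ring
  constructor
  · intro x hx
    refine ⟨key x hx, ![x, 1], ⟨1, by simp⟩, key x hx⟩
  · have h0 : c * (0:Hs) ^ 2 + (d - a) * 0 = 0 := by simp
    refine ⟨![0, 1], ⟨1, by simp⟩, ?_⟩
    have := key 0 h0
    simpa using this
end

section
/- Let A be the 2×2 upper triangular split quaternion matrix with rows (a, b) and (0, d). For any split quaternion x with b x^2 + (a - d) x = 0, the element λ = a + b x is a left eigenvalue of A with eigenvector (1, x)^T; and for any x with (d - a) x = b, the element d is a left eigenvalue with eigenvector (x, 1)^T. -/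
open Quaternion

/-- For the upper triangular matrix `![![a, b], ![0, d]]`: if
`b x² + (a - d) x = 0` then `a + b x` is a left eigenvalue with eigenvector
`(1, x)ᵀ`; and if `(d - a) x = b` then `d` is a left eigenvalue with
eigenvector `(x, 1)ᵀ`. -/
theorem upper_triangular_eigs (a b d : Hs) :
    (∀ x : Hs, b * x ^ 2 + (a - d) * x = 0 →
      (Matrix.mulVec !![a, b; 0, d] ![1, x] = fun i => (a + b * x) * (![1, x] i)) ∧
        IsLeftEigenvalue !![a, b; 0, d] (a + b * x)) ∧
    (∀ x : Hs, (d - a) * x = b →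
      (Matrix.mulVec !![a, b; 0, d] ![x, 1] = fun i => d * (![x, 1] i)) ∧
        IsLeftEigenvalue !![a, b; 0, d] d) := by
  constructor
  · intro x hx
    have h2 : d * x = (a + b * x) * x := by
      have h := eq_neg_of_add_eq_zero_left hx
      calc d * x = a * x + -((a - d) * x) := by noncomm_ring
        _ = a * x + b * x ^ 2 := by rw [h]
        _ = (a + b * x) * x := by noncomm_ring
    have key : Matrix.mulVec !![a, b; 0, d] ![1, x] = fun i => (a + b * x) * (![1, x] i) := by
      funext i
      fin_cases i
      · simp [Matrix.mulVec, dotProduct, Fin.sum_univ_two]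
      · simpa [Matrix.mulVec, dotProduct, Fin.sum_univ_two] using h2
    exact ⟨key, ![1, x], ⟨0, by simp⟩, key⟩
  · intro x hx
    have h1 : a * x + b = d * x := by
      calc a * x + b = a * x + (d - a) * x := by rw [hx]
        _ = d * x := by noncomm_ring
    have key : Matrix.mulVec !![a, b; 0, d] ![x, 1] = fun i => d * (![x, 1] i) := by
      funext i
      fin_cases i
      · simpa [Matrix.mulVec, dotProduct, Fin.sum_univ_two] using h1
      · simp [Matrix.mulVec, dotProduct, Fin.sum_univ_two]
    exact ⟨key, ![x, 1], ⟨1, by simp⟩, key⟩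
end

section
/- Let A be a 2×2 split quaternion matrix with entries a, b (first row) and c, d (second row). If x is a split quaternion satisfying b x^2 + (a - d) x - c = 0, then λ = a + b x is a left eigenvalue of A with eigenvector (1, x)^T. Symmetrically, if x satisfies c x^2 + (d - a) x - b = 0, then λ = d + c x is a left eigenvalue with eigenvector (x, 1)^T. -/
open Quaternion

/-- For `A = ![![a, b], ![c, d]]`: if `b x² + (a - d) x - c = 0` then
`a + b x` is a left eigenvalue with eigenvector `(1, x)ᵀ`; and if
`c x² + (d - a) x - b = 0` then `d + c x` is a left eigenvalue with
eigenvector `(x, 1)ᵀ`. -/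
theorem general_2x2_eigs (a b c d : Hs) :
    (∀ x : Hs, b * x ^ 2 + (a - d) * x - c = 0 →
      (Matrix.mulVec !![a, b; c, d] ![1, x] = fun i => (a + b * x) * (![1, x] i)) ∧
        IsLeftEigenvalue !![a, b; c, d] (a + b * x)) ∧
    (∀ x : Hs, c * x ^ 2 + (d - a) * x - b = 0 →
      (Matrix.mulVec !![a, b; c, d] ![x, 1] = fun i => (d + c * x) * (![x, 1] i)) ∧
        IsLeftEigenvalue !![a, b; c, d] (d + c * x)) := by
  constructor
  · intro x hx
    have e : (a + b * x) * x = (b * x ^ 2 + (a - d) * x - c) + (c + d * x) := by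
      noncomm_ring
    rw [hx, zero_add] at e
    have hm : Matrix.mulVec !![a, b; c, d] ![1, x] = fun i => (a + b * x) * (![1, x] i) := by
      funext i
      fin_cases i <;>
        simp [Matrix.mulVec, dotProduct, Fin.sum_univ_two, e]
    exact ⟨hm, ![1, x], ⟨0, by simp⟩, hm⟩
  · intro x hx
    have e : (d + c * x) * x = (c * x ^ 2 + (d - a) * x - b) + (b + a * x) := by
      noncomm_ring
    rw [hx, zero_add] at e
    have hm : Matrix.mulVec !![a, b; c, d] ![x, 1] = fun i => (d + c * x) * (![x, 1] i) := by
      funext i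
      fin_cases i <;>
        simp [Matrix.mulVec, dotProduct, Fin.sum_univ_two, e, add_comm]
    exact ⟨hm, ![x, 1], ⟨1, by simp⟩, hm⟩
end

section
/- The split quaternion equation x^2 = (-3 + i + j + k)/8 has no solution in H_s. Consequently, the 2×2 matrix A with rows (1, 1) and (-3 - i - j - k, 1) admits no split quaternion x satisfying x^2 + 3 + i + j + k = 0 and no x satisfying (-3 - i - j - k) x^2 - 1 = 0. -/
open Quaternion

/-- The basis element `i` of the split quaternions. -/
def iq : Hs := ⟨0, 1, 0, 0⟩

/-- The basis element `k` of the split quaternions. -/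
def kq : Hs := ⟨0, 0, 0, 1⟩

lemma key_real (a b c d r s : ℝ) (hr : r ≠ 0) (hs : s < 0)
    (h1 : a * a + -(b * b) + c * c + d * d = s)
    (h2 : a * b + b * a - c * d + d * c = r)
    (h3 : a * c + -(b * d) + c * a + d * b = r)
    (h4 : a * d + b * c - c * b + d * a = r) : False := by
  have ha : a ≠ 0 := by rintro rfl; exact hr (by linarith)
  have hbc : b = c := by
    have : a * (b - c) = 0 := by linarith
    rcases mul_eq_zero.1 this with h | h
    · exact absurd h ha
    · linarith
  have hbd : b = d := by
    have : a * (b - d) = 0 := by linarith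
    rcases mul_eq_zero.1 this with h | h
    · exact absurd h ha
    · linarith
  subst hbc; subst hbd; nlinarith [sq_nonneg a, sq_nonneg b]

lemma key : ¬ ∃ x : Hs, x ^ 2 = (8 : ℝ)⁻¹ • (-3 + iq + jq + kq) := by
  rintro ⟨⟨a, b, c, d⟩, hx⟩
  have e1 : (3 : Hs).re = 3 := rfl
  have e2 : (3 : Hs).imI = 0 := rfl
  have e3 : (3 : Hs).imJ = 0 := rfl
  have e4 : (3 : Hs).imK = 0 := rfl
  rw [QuaternionAlgebra.ext_iff] at hx
  simp [pow_two, iq, jq, kq, e1, e2, e3, e4, QuaternionAlgebra.re_mul,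
    QuaternionAlgebra.imI_mul, QuaternionAlgebra.imJ_mul, QuaternionAlgebra.imK_mul] at hx
  obtain ⟨h1, h2, h3, h4⟩ := hx
  exact key_real a b c d 8⁻¹ _ (by norm_num) (by linarith) h1 h2 h3 h4

/-- The equation `x² = (-3 + i + j + k)/8` has no split quaternion solution;
consequently there is no `x` with `x² + 3 + i + j + k = 0` and no `x` with
`(-3 - i - j - k) x² - 1 = 0`. -/
theorem no_solution_example :
    (¬ ∃ x : Hs, x ^ 2 = (8 : ℝ)⁻¹ • (-3 + iq + jq + kq)) ∧
    (¬ ∃ x : Hs, x ^ 2 + 3 + iq + jq + kq = 0) ∧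
    (¬ ∃ x : Hs, (-3 - iq - jq - kq) * x ^ 2 - 1 = 0) := by
  refine ⟨key, ?_, ?_⟩
  · rintro ⟨⟨a, b, c, d⟩, hx⟩
    have e1 : (3 : Hs).re = 3 := rfl
    have e2 : (3 : Hs).imI = 0 := rfl
    have e3 : (3 : Hs).imJ = 0 := rfl
    have e4 : (3 : Hs).imK = 0 := rfl
    rw [QuaternionAlgebra.ext_iff] at hx
    simp [pow_two, iq, jq, kq, e1, e2, e3, e4, QuaternionAlgebra.re_mul,
      QuaternionAlgebra.imI_mul, QuaternionAlgebra.imJ_mul, QuaternionAlgebra.imK_mul] at hx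
    obtain ⟨h1, h2, h3, h4⟩ := hx
    exact key_real a b c d (-1) (-3) (by norm_num) (by norm_num) (by linarith) (by linarith)
      (by linarith) (by linarith)
  · rintro ⟨x, hx⟩
    apply key
    refine ⟨x, ?_⟩
    have hq : ((8 : ℝ)⁻¹ • (-3 + iq + jq + kq)) * (-3 - iq - jq - kq) = 1 := by
      have e1 : (3 : Hs).re = 3 := rfl
      have e2 : (3 : Hs).imI = 0 := rfl
      have e3 : (3 : Hs).imJ = 0 := rfl
      have e4 : (3 : Hs).imK = 0 := rfl
      have o1 : (1 : Hs).re = 1 := rfl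
      have o2 : (1 : Hs).imI = 0 := rfl
      have o3 : (1 : Hs).imJ = 0 := rfl
      have o4 : (1 : Hs).imK = 0 := rfl
      rw [QuaternionAlgebra.ext_iff]
      simp [iq, jq, kq, e1, e2, e3, e4, o1, o2, o3, o4, QuaternionAlgebra.re_mul,
        QuaternionAlgebra.imI_mul, QuaternionAlgebra.imJ_mul, QuaternionAlgebra.imK_mul]
      norm_num
    have h1 : (-3 - iq - jq - kq) * x ^ 2 = 1 := by
      have := sub_eq_zero.mp hx
      simpa using this
    calc x ^ 2 = 1 * x ^ 2 := (one_mul _).symm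
      _ = (((8 : ℝ)⁻¹ • (-3 + iq + jq + kq)) * (-3 - iq - jq - kq)) * x ^ 2 := by rw [hq]
      _ = ((8 : ℝ)⁻¹ • (-3 + iq + jq + kq)) * ((-3 - iq - jq - kq) * x ^ 2) := by
          rw [mul_assoc]
      _ = (8 : ℝ)⁻¹ • (-3 + iq + jq + kq) := by rw [h1, mul_one]
end
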